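/- arXiv:1912.03616 — 4 statements merged into one kernel-verified Lean document; each statement's English description precedes it below -/
import Mathlib

section
/- Let M ∈ ℝ^{m×n}, let G ∈ ℝ^{p×m} with GGᵀ invertible, and let H ∈ ℝ^{n×q} with HᵀH invertible. Define D = M − Gᵀ (GGᵀ)⁻¹ G M H (HᵀH)⁻¹ Hᵀ. Then for every D' ∈ ℝ^{m×n} satisfying G D' H = 0, one has ‖M − D‖_F ≤ ‖M − D'‖_F; that is, D minimizes the Frobenius distance ½‖M − D'‖_F² over the set { D' : G D' H = 0 }. -/
open Matrix

attribute [local instance] Matrix.frobeniusNormedAddCommGroup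

private lemma trace_transpose_mul_self_nonneg {m n : ℕ}
    (A : Matrix (Fin m) (Fin n) ℝ) : 0 ≤ (Aᵀ * A).trace := by
  rw [Matrix.trace]
  refine Finset.sum_nonneg fun j _ => ?_
  rw [Matrix.diag_apply, Matrix.mul_apply]
  exact Finset.sum_nonneg fun i _ => by
    simp [Matrix.transpose_apply, mul_self_nonneg]

private lemma frob_norm_eq {m n : ℕ} (A : Matrix (Fin m) (Fin n) ℝ) :
    ‖A‖ = Real.sqrt (Aᵀ * A).trace := by
  have h : (Aᵀ * A).trace = ∑ i, ∑ j, A i j * A i j := by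
    simp only [Matrix.trace, Matrix.diag_apply, Matrix.mul_apply,
      Matrix.transpose_apply]
    exact Finset.sum_comm ..
  rw [Matrix.frobenius_norm_def, h, Real.sqrt_eq_rpow]
  congr 1
  refine Finset.sum_congr rfl fun i _ => Finset.sum_congr rfl fun j _ => ?_
  simp [Real.norm_eq_abs, sq, abs_mul_abs_self]

private lemma proj_trace_le {m n : ℕ}
    (P : Matrix (Fin m) (Fin m) ℝ) (Q : Matrix (Fin n) (Fin n) ℝ)
    (X : Matrix (Fin m) (Fin n) ℝ)
    (hP : P * P = P) (hPt : Pᵀ = P) (hQ : Q * Q = Q) (hQt : Qᵀ = Q) :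
    ((P * X * Q)ᵀ * (P * X * Q)).trace ≤ (Xᵀ * X).trace := by
  set Y := P * X * Q with hY
  set R := X - Y with hR
  have hYt : Yᵀ = Q * Xᵀ * P := by
    simp [hY, Matrix.transpose_mul, hPt, hQt, Matrix.mul_assoc]
  have hcross : (Yᵀ * R).trace = 0 := by
    have e1 : Yᵀ * R = Q * Xᵀ * P * X - Q * Xᵀ * P * X * Q := by
      rw [hYt, hR, hY, Matrix.mul_sub]
      congr 1
      have h2 : Q * Xᵀ * P * (P * X * Q) = Q * Xᵀ * (P * P) * (X * Q) := by
        simp only [Matrix.mul_assoc]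
      rw [h2, hP]
      simp only [Matrix.mul_assoc]
    rw [e1, Matrix.trace_sub]
    have h3 : (Q * Xᵀ * P * X * Q).trace = (Q * Xᵀ * P * X).trace := by
      rw [Matrix.trace_mul_comm]
      have : Q * (Q * Xᵀ * P * X) = (Q * Q) * Xᵀ * (P * X) := by
        simp only [Matrix.mul_assoc]
      rw [this, hQ]
      simp only [Matrix.mul_assoc]
    rw [h3, sub_self]
  have hcross' : (Rᵀ * Y).trace = 0 := by
    have : (Rᵀ * Y).trace = ((Rᵀ * Y)ᵀ).trace := (Matrix.trace_transpose _).symm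
    rw [this, Matrix.transpose_mul, Matrix.transpose_transpose, hcross]
  have hexp : (Xᵀ * X).trace
      = (Yᵀ * Y).trace + (Rᵀ * R).trace := by
    have hX : X = Y + R := by simp [hR]
    calc (Xᵀ * X).trace = ((Y + R)ᵀ * (Y + R)).trace := by rw [← hX]
      _ = (Yᵀ * Y).trace + (Yᵀ * R).trace + (Rᵀ * Y).trace + (Rᵀ * R).trace := by
          simp only [Matrix.transpose_add, Matrix.add_mul, Matrix.mul_add,
            Matrix.trace_add]
          ring
      _ = (Yᵀ * Y).trace + (Rᵀ * R).trace := by rw [hcross, hcross']; ring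
  rw [hexp]
  have := trace_transpose_mul_self_nonneg R
  linarith

/-- The projected gradient `D = M − Gᵀ(GGᵀ)⁻¹ G M H (HᵀH)⁻¹ Hᵀ` minimizes the
Frobenius distance to `M` over the set `{D' : G D' H = 0}`. -/
theorem projected_gradient_minimizes {m n p q : ℕ}
    (M : Matrix (Fin m) (Fin n) ℝ)
    (G : Matrix (Fin p) (Fin m) ℝ) (hG : IsUnit (G * Gᵀ))
    (H : Matrix (Fin n) (Fin q) ℝ) (hH : IsUnit (Hᵀ * H)) :
    ∀ D' : Matrix (Fin m) (Fin n) ℝ, G * D' * H = 0 →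
      ‖M - (M - Gᵀ * (G * Gᵀ)⁻¹ * G * M * H * (Hᵀ * H)⁻¹ * Hᵀ)‖ ≤ ‖M - D'‖ := by
  intro D' hD'
  have hGd : IsUnit (G * Gᵀ).det := (Matrix.isUnit_iff_isUnit_det _).mp hG
  have hHd : IsUnit (Hᵀ * H).det := (Matrix.isUnit_iff_isUnit_det _).mp hH
  set P := Gᵀ * (G * Gᵀ)⁻¹ * G with hPdef
  set Q := H * (Hᵀ * H)⁻¹ * Hᵀ with hQdef
  have hPt : Pᵀ = P := by
    simp [hPdef, Matrix.transpose_mul, Matrix.transpose_nonsing_inv, Matrix.mul_assoc]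
  have hQt : Qᵀ = Q := by
    simp [hQdef, Matrix.transpose_mul, Matrix.transpose_nonsing_inv, Matrix.mul_assoc]
  have hP : P * P = P := by
    simp only [hPdef, Matrix.mul_assoc]
    rw [← Matrix.mul_assoc G Gᵀ, ← Matrix.mul_assoc (G * Gᵀ)⁻¹,
      Matrix.nonsing_inv_mul _ hGd, Matrix.one_mul]
  have hQ : Q * Q = Q := by
    simp only [hQdef, Matrix.mul_assoc]
    rw [← Matrix.mul_assoc Hᵀ H, ← Matrix.mul_assoc (Hᵀ * H)⁻¹,
      Matrix.nonsing_inv_mul _ hHd, Matrix.one_mul]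
  set X := M - D' with hXdef
  have hMD : M - (M - Gᵀ * (G * Gᵀ)⁻¹ * G * M * H * (Hᵀ * H)⁻¹ * Hᵀ) = P * X * Q := by
    have hzero : P * D' * Q = 0 := by
      have : P * D' * Q = Gᵀ * (G * Gᵀ)⁻¹ * (G * D' * H) * ((Hᵀ * H)⁻¹ * Hᵀ) := by
        simp [hPdef, hQdef, Matrix.mul_assoc]
      rw [this, hD']
      simp
    have : P * X * Q = P * M * Q - P * D' * Q := by
      simp [hXdef, Matrix.sub_mul, Matrix.mul_sub]
    rw [this, hzero, sub_zero]
    simp [hPdef, hQdef, Matrix.mul_assoc]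
  rw [hMD, frob_norm_eq, frob_norm_eq]
  exact Real.sqrt_le_sqrt (proj_trace_le P Q X hP hPt hQ hQt)
end

section
/- Let M ∈ ℝ^{m×n}, let G ∈ ℝ^{p×m} with GGᵀ invertible, and let H ∈ ℝ^{n×q} with HᵀH invertible. Define D = M − Gᵀ (GGᵀ)⁻¹ G M H (HᵀH)⁻¹ Hᵀ. Then D is the unique minimizer of ½‖M − D'‖_F² over { D' ∈ ℝ^{m×n} : G D' H = 0 }: for every D' with G D' H = 0 and D' ≠ D, one has ‖M − D‖_F < ‖M − D'‖_F. -/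
open Matrix

attribute [local instance] Matrix.frobeniusNormedAddCommGroup

private lemma fnorm_eq {m n : ℕ} (A : Matrix (Fin m) (Fin n) ℝ) :
    ‖A‖ = Real.sqrt (∑ i, ∑ j, (A i j)^2) := by
  rw [frobenius_norm_def, Real.sqrt_eq_rpow]
  congr 1
  simp [Real.rpow_two, sq_abs]

private lemma trace_eq {m n : ℕ} (A B : Matrix (Fin m) (Fin n) ℝ) :
    trace (Aᵀ * B) = ∑ i, ∑ j, A i j * B i j := by
  simp [Matrix.trace, Matrix.diag, Matrix.mul_apply]
  exact Finset.sum_comm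

/-- The projected gradient `D = M − Gᵀ(GGᵀ)⁻¹ G M H (HᵀH)⁻¹ Hᵀ` is the unique
minimizer of the Frobenius distance to `M` over the set `{D' : G D' H = 0}`:
any other feasible `D'` is strictly farther from `M`. -/
theorem projected_gradient_unique_minimizer {m n p q : ℕ}
    (M : Matrix (Fin m) (Fin n) ℝ)
    (G : Matrix (Fin p) (Fin m) ℝ) (hG : IsUnit (G * Gᵀ))
    (H : Matrix (Fin n) (Fin q) ℝ) (hH : IsUnit (Hᵀ * H)) :
    ∀ D' : Matrix (Fin m) (Fin n) ℝ, G * D' * H = 0 →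
      D' ≠ M - Gᵀ * (G * Gᵀ)⁻¹ * G * M * H * (Hᵀ * H)⁻¹ * Hᵀ →
      ‖M - (M - Gᵀ * (G * Gᵀ)⁻¹ * G * M * H * (Hᵀ * H)⁻¹ * Hᵀ)‖ < ‖M - D'‖ := by
  intro D' hfeas hne
  have hGdet : IsUnit (G * Gᵀ).det := (Matrix.isUnit_iff_isUnit_det _).mp hG
  have hHdet : IsUnit (Hᵀ * H).det := (Matrix.isUnit_iff_isUnit_det _).mp hH
  have hGinv : G * Gᵀ * (G * Gᵀ)⁻¹ = 1 := Matrix.mul_nonsing_inv _ hGdet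
  have hHinv : (Hᵀ * H)⁻¹ * (Hᵀ * H) = 1 := Matrix.nonsing_inv_mul _ hHdet
  set E : Matrix (Fin m) (Fin n) ℝ := Gᵀ * (G * Gᵀ)⁻¹ * G * M * H * (Hᵀ * H)⁻¹ * Hᵀ with hE
  set D : Matrix (Fin m) (Fin n) ℝ := M - E with hD
  -- feasibility of D
  have hDfeas : G * D * H = 0 := by
    have h1 : G * E * H = G * M * H := by
      calc G * E * H
          = (G * Gᵀ * (G * Gᵀ)⁻¹) * (G * M * H) * ((Hᵀ * H)⁻¹ * (Hᵀ * H)) := by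
            rw [hE]; simp only [Matrix.mul_assoc]
        _ = G * M * H := by rw [hGinv, hHinv]; simp [Matrix.mul_assoc]
    rw [hD]
    simp [Matrix.sub_mul, Matrix.mul_sub, h1]
  set X : Matrix (Fin m) (Fin n) ℝ := D - D' with hX
  have hXfeas : G * X * H = 0 := by
    rw [hX]
    simp [Matrix.sub_mul, Matrix.mul_sub, hDfeas, hfeas]
  have hXne : X ≠ 0 := sub_ne_zero.mpr (fun h => hne h.symm)
  -- M - D' = E + X
  have hdecomp : M - D' = E + X := by rw [hX, hD]; abel
  have hMD : M - D = E := by rw [hD]; abel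
  -- orthogonality
  have horth : ∑ i, ∑ j, E i j * X i j = 0 := by
    rw [← trace_eq]
    have hEt : Eᵀ = H * (Hᵀ * H)⁻¹ * Hᵀ * Mᵀ * Gᵀ * (G * Gᵀ)⁻¹ * G := by
      rw [hE]
      simp only [Matrix.transpose_mul, Matrix.transpose_transpose,
        Matrix.transpose_nonsing_inv, Matrix.mul_assoc]
    have h2 : Eᵀ * X = (H * (Hᵀ * H)⁻¹ * Hᵀ * Mᵀ * Gᵀ * (G * Gᵀ)⁻¹) * (G * X) := by
      rw [hEt]; simp only [Matrix.mul_assoc]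
    rw [h2, Matrix.trace_mul_comm]
    have h3 : G * X * (H * (Hᵀ * H)⁻¹ * Hᵀ * Mᵀ * Gᵀ * (G * Gᵀ)⁻¹)
        = (G * X * H) * ((Hᵀ * H)⁻¹ * Hᵀ * Mᵀ * Gᵀ * (G * Gᵀ)⁻¹) := by
      simp only [Matrix.mul_assoc]
    rw [h3, hXfeas, Matrix.zero_mul, Matrix.trace_zero]
  -- Pythagoras
  have hpy : ∑ i, ∑ j, ((E + X) i j)^2
      = (∑ i, ∑ j, (E i j)^2) + ∑ i, ∑ j, (X i j)^2 := by
    have : ∀ i j, ((E + X) i j)^2 = (E i j)^2 + 2 * (E i j * X i j) + (X i j)^2 := by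
      intro i j; simp [Matrix.add_apply]; ring
    simp only [this, Finset.sum_add_distrib, ← Finset.mul_sum, horth]
    ring
  have hXpos : 0 < ∑ i, ∑ j, (X i j)^2 := by
    have : 0 < ‖X‖ := norm_pos_iff.mpr hXne
    rw [fnorm_eq] at this
    exact Real.sqrt_pos.mp this
  rw [hMD, hdecomp, fnorm_eq, fnorm_eq, hpy]
  apply Real.sqrt_lt_sqrt
  · positivity
  · linarith
end

section
/- Let M ∈ ℝ^{m×n}, let G ∈ ℝ^{p×m} with GGᵀ invertible, and let H ∈ ℝ^{n×q} with HᵀH invertible. Then M − Gᵀ (GGᵀ)⁻¹ G M H (HᵀH)⁻¹ Hᵀ = 0 if and only if there exists Λ₀ ∈ ℝ^{p×q} such that M = Gᵀ Λ₀ Hᵀ. (The projected gradient vanishes exactly when the gradient lies in the span of the constraint normals, i.e., the KKT stationarity condition of the constrained problem holds.) -/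
open Matrix

/-- The projected gradient vanishes exactly when the gradient lies in the span of
the constraint normals: `M − Gᵀ(GGᵀ)⁻¹ G M H (HᵀH)⁻¹ Hᵀ = 0` iff `M = Gᵀ Λ₀ Hᵀ`
for some `Λ₀` (KKT stationarity). -/
theorem projected_gradient_zero_iff_kkt {m n p q : ℕ}
    (M : Matrix (Fin m) (Fin n) ℝ)
    (G : Matrix (Fin p) (Fin m) ℝ) (hG : IsUnit (G * Gᵀ))
    (H : Matrix (Fin n) (Fin q) ℝ) (hH : IsUnit (Hᵀ * H)) :
    M - Gᵀ * (G * Gᵀ)⁻¹ * G * M * H * (Hᵀ * H)⁻¹ * Hᵀ = 0 ↔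
      ∃ Λ₀ : Matrix (Fin p) (Fin q) ℝ, M = Gᵀ * Λ₀ * Hᵀ := by
  rw [sub_eq_zero]
  constructor
  · intro h
    refine ⟨(G * Gᵀ)⁻¹ * G * M * H * (Hᵀ * H)⁻¹, ?_⟩
    conv_lhs => rw [h]
    simp only [Matrix.mul_assoc]
  · rintro ⟨Λ, rfl⟩
    have hGd : IsUnit (G * Gᵀ).det := (Matrix.isUnit_iff_isUnit_det _).mp hG
    have hHd : IsUnit (Hᵀ * H).det := (Matrix.isUnit_iff_isUnit_det _).mp hH
    have h1 : (G * Gᵀ)⁻¹ * (G * Gᵀ) = 1 := Matrix.nonsing_inv_mul _ hGd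
    have h2 : (Hᵀ * H) * (Hᵀ * H)⁻¹ = 1 := Matrix.mul_nonsing_inv _ hHd
    calc Gᵀ * Λ * Hᵀ = Gᵀ * ((G * Gᵀ)⁻¹ * (G * Gᵀ)) * Λ * ((Hᵀ * H) * (Hᵀ * H)⁻¹) * Hᵀ := by
          rw [h1, h2, Matrix.mul_one, Matrix.mul_one]
      _ = Gᵀ * (G * Gᵀ)⁻¹ * G * (Gᵀ * Λ * Hᵀ) * H * (Hᵀ * H)⁻¹ * Hᵀ := by simp only [Matrix.mul_assoc]
end

section
/- Let M ∈ ℝ^{m×n}, let N ≥ 1, and for i = 1,…,N let G_i ∈ ℝ^{p_i×m} and H_i ∈ ℝ^{n×q_i}. Suppose Λ_1,…,Λ_N with Λ_i ∈ ℝ^{p_i×q_i} satisfy G_j M H_j = Σ_{i=1}^N G_j G_iᵀ Λ_i H_iᵀ H_j for every j = 1,…,N, and set D = M − Σ_{i=1}^N G_iᵀ Λ_i H_iᵀ. Then D minimizes the Frobenius distance to M over the feasible set: for every D' ∈ ℝ^{m×n} with G_i D' H_i = 0 for all i = 1,…,N, one has ‖M − D‖_F ≤ ‖M − D'‖_F.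 -/
open Matrix

attribute [local instance] Matrix.frobeniusNormedAddCommGroup

/-- Frobenius inner product as a trace. -/
lemma frob_inner_trace {m n : ℕ} (A B : Matrix (Fin m) (Fin n) ℝ) :
    (Aᵀ * B).trace = ∑ i, ∑ j, A i j * B i j := by
  simp [Matrix.trace, Matrix.mul_apply, Matrix.diag, Matrix.transpose_apply]
  rw [Finset.sum_comm]

/-- If the multipliers `Λ_i` solve the coupled equations
`G_j M H_j = Σ_i G_j G_iᵀ Λ_i H_iᵀ H_j` for all `j`, then
`D = M − Σ_i G_iᵀ Λ_i H_iᵀ` minimizes the Frobenius distance to `M` over the set of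
matrices satisfying all the structural constraints. -/
theorem multi_constraint_projection_minimizes {m n N : ℕ} (hN : 1 ≤ N)
    (M : Matrix (Fin m) (Fin n) ℝ)
    (p q : Fin N → ℕ)
    (G : ∀ i : Fin N, Matrix (Fin (p i)) (Fin m) ℝ)
    (H : ∀ i : Fin N, Matrix (Fin n) (Fin (q i)) ℝ)
    (Λ : ∀ i : Fin N, Matrix (Fin (p i)) (Fin (q i)) ℝ)
    (hΛ : ∀ j : Fin N,
      G j * M * H j = ∑ i : Fin N, G j * (G i)ᵀ * Λ i * (H i)ᵀ * H j) :
    ∀ D' : Matrix (Fin m) (Fin n) ℝ, (∀ i : Fin N, G i * D' * H i = 0) →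
      ‖M - (M - ∑ i : Fin N, (G i)ᵀ * Λ i * (H i)ᵀ)‖ ≤ ‖M - D'‖ := by
  intro D' hD'
  set S : Matrix (Fin m) (Fin n) ℝ := ∑ i : Fin N, (G i)ᵀ * Λ i * (H i)ᵀ with hS
  have hMD : M - (M - S) = S := by abel
  rw [hMD]
  set E : Matrix (Fin m) (Fin n) ℝ := M - D' - S with hE
  have hSE : M - D' = S + E := by rw [hE]; abel
  -- G j * E * H j = 0
  have hGEH : ∀ j : Fin N, G j * E * H j = 0 := by
    intro j
    have hGSH : G j * S * H j = ∑ i : Fin N, G j * (G i)ᵀ * Λ i * (H i)ᵀ * H j := by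
      rw [hS, Matrix.mul_sum, Matrix.sum_mul]
      refine Finset.sum_congr rfl fun i _ => ?_
      simp [Matrix.mul_assoc]
    rw [hE]
    have : G j * (M - D' - S) * H j = G j * M * H j - G j * D' * H j - G j * S * H j := by
      simp only [Matrix.mul_sub, Matrix.sub_mul]
    rw [this, hD' j, hGSH, hΛ j]
    simp
  -- orthogonality: Σ S i j * E i j = 0
  have horth : ∑ i, ∑ j, S i j * E i j = 0 := by
    rw [← frob_inner_trace]
    have : Sᵀ * E = ∑ i : Fin N, (H i) * (Λ i)ᵀ * (G i) * E := by
      rw [hS, Matrix.transpose_sum, Matrix.sum_mul]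
      refine Finset.sum_congr rfl fun i _ => ?_
      simp [Matrix.transpose_mul, Matrix.mul_assoc]
    rw [this, Matrix.trace_sum]
    refine Finset.sum_eq_zero fun i _ => ?_
    have : (H i * (Λ i)ᵀ * G i * E).trace = ((Λ i)ᵀ * (G i * E * H i)).trace := by
      rw [show H i * (Λ i)ᵀ * G i * E = H i * ((Λ i)ᵀ * (G i * E)) by
        simp [Matrix.mul_assoc]]
      rw [Matrix.trace_mul_comm]
      simp [Matrix.mul_assoc]
    rw [this, hGEH i]
    simp
  -- norm comparison
  rw [hSE, Matrix.frobenius_norm_def, Matrix.frobenius_norm_def]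
  apply Real.rpow_le_rpow
  · positivity
  · have expand : ∀ i j, ‖(S + E) i j‖ ^ (2 : ℝ) =
        ‖S i j‖ ^ (2 : ℝ) + 2 * (S i j * E i j) + ‖E i j‖ ^ (2 : ℝ) := by
      intro i j
      simp only [Matrix.add_apply, Real.norm_eq_abs, Real.rpow_two, sq_abs]
      ring
    calc ∑ i, ∑ j, ‖S i j‖ ^ (2 : ℝ)
        ≤ ∑ i, ∑ j, ‖S i j‖ ^ (2 : ℝ) + ∑ i, ∑ j, ‖E i j‖ ^ (2 : ℝ) := by
          have : (0:ℝ) ≤ ∑ i, ∑ j, ‖E i j‖ ^ (2 : ℝ) := by positivity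
          linarith
      _ = ∑ i, ∑ j, ‖(S + E) i j‖ ^ (2 : ℝ) := by
          simp_rw [expand, Finset.sum_add_distrib, ← Finset.mul_sum, horth]
          ring
  · norm_num
end
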